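/- Let (P, ρ) be a probability space, f : P → ℝ integrable with ∫_{P×P} |f(v) - f(v')| dρ(v)dρ(v') =: Osc, and suppose the set E = {v : f(v) ∉ ℤ} satisfies ρ(E) < 1/4 and Osc < 1/4. Then there exists an integer k and a set E' ⊆ P with ρ(E') ≥ 1/2 on which f ≡ k. -/

import Mathlib

open MeasureTheory

lemma key_ineq (a b c : ℝ) (ha0 : 0 ≤ a) (hb0 : 0 ≤ b) (hc0 : 0 ≤ c)
    (ha : a < 1/2) (hb : b < 1/2) (hc : c ≤ 1/2) (hs : 3/4 < a+b+c) :
    1/4 < 2*a*b + 2*b*c + 4*a*c := by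
  nlinarith [mul_nonneg (le_of_lt (by linarith : (0:ℝ) < 1/2 - a)) (le_of_lt (by linarith : (0:ℝ) < 1/2 - b)),
    mul_nonneg (by linarith : (0:ℝ) ≤ 1/2 - b) (by linarith : (0:ℝ) ≤ 1/2 - c),
    mul_nonneg (by linarith : (0:ℝ) ≤ 1/2 - a) (by linarith : (0:ℝ) ≤ 1/2 - c),
    mul_pos (by linarith : (0:ℝ) < 1/2 - a) (by linarith : (0:ℝ) < a + b + c - 3/4),
    mul_pos (by linarith : (0:ℝ) < 1/2 - b) (by linarith : (0:ℝ) < a + b + c - 3/4),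
    mul_nonneg (by linarith : (0:ℝ) ≤ 1/2 - c) (by linarith : (0:ℝ) ≤ a + b + c - 3/4),
    mul_nonneg ha0 hb0, mul_nonneg hb0 hc0, mul_nonneg ha0 hc0,
    mul_nonneg ha0 (by linarith : (0:ℝ) ≤ a + b + c - 3/4),
    mul_nonneg hc0 (by linarith : (0:ℝ) ≤ a + b + c - 3/4),
    mul_nonneg hb0 (by linarith : (0:ℝ) ≤ a + b + c - 3/4)]

theorem aux_reduction {P : Type*} [MeasurableSpace P]
    (ρ : Measure P) [IsProbabilityMeasure ρ]
    (f : P → ℝ) (hfmeas : Measurable f) (hf : Integrable f ρ)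
    (hE : ρ {v | ¬ ∃ z : ℤ, f v = (z : ℝ)} < ENNReal.ofReal (1 / 4))
    (hosc : ∫ p : P × P, |f p.1 - f p.2| ∂(ρ.prod ρ) < 1 / 4)
    (k : ℤ)
    (hk : (1:ℝ)/2 ≤ (ρ {v | f v ≤ ((k:ℤ):ℝ)}).toReal)
    (hk1 : (ρ {v | f v ≤ (((k-1:ℤ)):ℝ)}).toReal < 1/2) :
    ∃ k : ℤ, ∃ E' : Set P, (∀ v ∈ E', f v = (k : ℝ)) ∧
      ENNReal.ofReal (1 / 2) ≤ ρ E' := by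
  classical
  set F : Set P := {v | ∃ z : ℤ, f v = (z : ℝ)} with hFdef
  have hFmeas : MeasurableSet F := by
    have : F = ⋃ z : ℤ, f ⁻¹' {(z:ℝ)} := by
      ext v; simp [hFdef, eq_comm]
    rw [this]
    exact MeasurableSet.iUnion fun z => hfmeas (measurableSet_singleton _)
  set A : Set P := F ∩ {v | f v < (k:ℝ)} with hAdef
  set B : Set P := F ∩ {v | f v = (k:ℝ)} with hBdef
  set C : Set P := F ∩ {v | (k:ℝ) < f v} with hCdef
  have hAmeas : MeasurableSet A := hFmeas.inter (hfmeas measurableSet_Iio)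
  have hBmeas : MeasurableSet B := hFmeas.inter (hfmeas (measurableSet_singleton _))
  have hCmeas : MeasurableSet C := hFmeas.inter (hfmeas measurableSet_Ioi)
  -- real measures
  set a : ℝ := (ρ A).toReal with hadef
  set b : ℝ := (ρ B).toReal with hbdef
  set c : ℝ := (ρ C).toReal with hcdef
  have ha0 : 0 ≤ a := ENNReal.toReal_nonneg
  have hb0 : 0 ≤ b := ENNReal.toReal_nonneg
  have hc0 : 0 ≤ c := ENNReal.toReal_nonneg
  -- pointwise bounds on A, B, C
  have hA_le : ∀ v ∈ A, f v ≤ (k:ℝ) - 1 := by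
    rintro v ⟨⟨z, hz⟩, hv⟩
    simp only [Set.mem_setOf_eq] at hv
    rw [hz] at hv
    have hzk : z < k := by exact_mod_cast hv
    have : (z:ℝ) ≤ (k:ℝ) - 1 := by
      have h1 : z ≤ k - 1 := by omega
      have h2 : (z:ℝ) ≤ ((k-1:ℤ):ℝ) := by exact_mod_cast h1
      push_cast at h2; linarith
    rw [hz]; linarith
  have hC_ge : ∀ v ∈ C, (k:ℝ) + 1 ≤ f v := by
    rintro v ⟨⟨z, hz⟩, hv⟩
    simp only [Set.mem_setOf_eq] at hv
    rw [hz] at hv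
    have hzk : k < z := by exact_mod_cast hv
    have : (k:ℝ) + 1 ≤ (z:ℝ) := by
      have h1 : k + 1 ≤ z := by omega
      have h2 : ((k+1:ℤ):ℝ) ≤ (z:ℝ) := by exact_mod_cast h1
      push_cast at h2; linarith
    rw [hz]; linarith
  -- a < 1/2
  have ha : a < 1/2 := by
    have hsub : A ⊆ {v | f v ≤ (((k-1:ℤ)):ℝ)} := by
      intro v hv
      have := hA_le v hv
      simp only [Set.mem_setOf_eq]; push_cast; linarith
    exact lt_of_le_of_lt (ENNReal.toReal_mono (measure_ne_top _ _) (measure_mono hsub)) hk1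
  -- c ≤ 1/2
  have hc : c ≤ 1/2 := by
    have hsub : C ⊆ {v | f v ≤ ((k:ℤ):ℝ)}ᶜ := by
      intro v hv
      have := hC_ge v hv
      simp only [Set.mem_compl_iff, Set.mem_setOf_eq, not_le]
      linarith
    have hms : MeasurableSet {v | f v ≤ ((k:ℤ):ℝ)} := hfmeas measurableSet_Iic
    have h1 : (ρ {v | f v ≤ ((k:ℤ):ℝ)}).toReal
        + (ρ {v | f v ≤ ((k:ℤ):ℝ)}ᶜ).toReal = 1 := by
      rw [← ENNReal.toReal_add (measure_ne_top _ _) (measure_ne_top _ _),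
        measure_add_measure_compl hms, measure_univ, ENNReal.toReal_one]
    have h2 : c ≤ (ρ {v | f v ≤ ((k:ℤ):ℝ)}ᶜ).toReal :=
      ENNReal.toReal_mono (measure_ne_top _ _) (measure_mono hsub)
    linarith
  -- a + b + c > 3/4
  have hdisjAB : Disjoint A B := by
    rw [Set.disjoint_left]; rintro v ⟨_, hv1⟩ ⟨_, hv2⟩
    simp only [Set.mem_setOf_eq] at hv1 hv2; linarith [hv2 ▸ hv1]
  have hdisjAC : Disjoint A C := by
    rw [Set.disjoint_left]; rintro v ⟨_, hv1⟩ ⟨_, hv2⟩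
    simp only [Set.mem_setOf_eq] at hv1 hv2; linarith
  have hdisjBC : Disjoint B C := by
    rw [Set.disjoint_left]; rintro v ⟨_, hv1⟩ ⟨_, hv2⟩
    simp only [Set.mem_setOf_eq] at hv1 hv2; linarith [hv1 ▸ hv2]
  have hunion : A ∪ B ∪ C = F := by
    ext v
    constructor
    · rintro ((h | h) | h) <;> exact h.1
    · intro hv
      rcases lt_trichotomy (f v) ((k:ℤ):ℝ) with h | h | h
      · exact Or.inl (Or.inl ⟨hv, h⟩)
      · exact Or.inl (Or.inr ⟨hv, h⟩)
      · exact Or.inr ⟨hv, h⟩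
  have hsum : ρ A + ρ B + ρ C = ρ F := by
    rw [← hunion, measure_union (Set.disjoint_union_left.mpr ⟨hdisjAC, hdisjBC⟩) hCmeas,
      measure_union hdisjAB hBmeas]
  have hsumR : a + b + c = (ρ F).toReal := by
    rw [← hsum, ENNReal.toReal_add (by finiteness) (by finiteness),
      ENNReal.toReal_add (by finiteness) (by finiteness)]
  have hFbig : (3:ℝ)/4 < (ρ F).toReal := by
    have hcompl : ρ Fᶜ < ENNReal.ofReal (1/4) := by
      have : Fᶜ = {v | ¬ ∃ z : ℤ, f v = (z : ℝ)} := by ext v; simp [hFdef]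
      rw [this]; exact hE
    have h1 : (ρ Fᶜ).toReal < 1/4 := ENNReal.toReal_lt_of_lt_ofReal hcompl
    have h2 : (ρ F).toReal + (ρ Fᶜ).toReal = 1 := by
      rw [← ENNReal.toReal_add (measure_ne_top _ _) (measure_ne_top _ _),
        measure_add_measure_compl hFmeas, measure_univ, ENNReal.toReal_one]
    linarith
  have hs : (3:ℝ)/4 < a + b + c := by rw [hsumR]; exact hFbig
  -- main case split
  by_cases hb : (1:ℝ)/2 ≤ b
  · refine ⟨k, B, ?_, ?_⟩
    · rintro v ⟨_, hv⟩; exact hv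
    · rw [hbdef] at hb
      exact (ENNReal.ofReal_le_of_le_toReal (by norm_num [hb])).trans_eq rfl |>.trans
        (le_refl _) |>.trans (le_refl _)
  · push_neg at hb
    exfalso
    -- integrability of the oscillation integrand
    set μ : Measure (P × P) := ρ.prod ρ with hμdef
    have hmpf : MeasurePreserving (Prod.fst : P × P → P) μ ρ :=
      ⟨measurable_fst, by simp [hμdef]⟩
    have hmps : MeasurePreserving (Prod.snd : P × P → P) μ ρ :=
      ⟨measurable_snd, by simp [hμdef]⟩
    have hint1 : Integrable (fun p : P × P => f p.1) μ :=
      (hmpf.integrable_comp hf.aestronglyMeasurable).mpr hf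
    have hint2 : Integrable (fun p : P × P => f p.2) μ :=
      (hmps.integrable_comp hf.aestronglyMeasurable).mpr hf
    have hgint : Integrable (fun p : P × P => |f p.1 - f p.2|) μ := (hint1.sub hint2).abs
    -- the two union sets
    set U₁ : Set (P × P) := (A ×ˢ B) ∪ (B ×ˢ A) ∪ (B ×ˢ C) ∪ (C ×ˢ B) with hU1def
    set U₂ : Set (P × P) := (A ×ˢ C) ∪ (C ×ˢ A) with hU2def
    have hU1meas : MeasurableSet U₁ :=
      (((hAmeas.prod hBmeas).union (hBmeas.prod hAmeas)).union
        (hBmeas.prod hCmeas)).union (hCmeas.prod hBmeas)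
    have hU2meas : MeasurableSet U₂ := (hAmeas.prod hCmeas).union (hCmeas.prod hAmeas)
    -- pointwise bounds
    have hB_eq : ∀ v ∈ B, f v = (k:ℝ) := by rintro v ⟨_, hv⟩; exact hv
    have hU1bd : ∀ p ∈ U₁, (1:ℝ) ≤ |f p.1 - f p.2| := by
      rintro ⟨v, w⟩ (((⟨hv, hw⟩ | ⟨hv, hw⟩) | ⟨hv, hw⟩) | ⟨hv, hw⟩)
      · have := hA_le v hv; have := hB_eq w hw
        rw [abs_sub_comm]; refine le_trans ?_ (le_abs_self _); linarith
      · have := hB_eq v hv; have := hA_le w hw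
        refine le_trans ?_ (le_abs_self _); linarith
      · have := hB_eq v hv; have := hC_ge w hw
        rw [abs_sub_comm]; refine le_trans ?_ (le_abs_self _); linarith
      · have := hC_ge v hv; have := hB_eq w hw
        refine le_trans ?_ (le_abs_self _); linarith
    have hU2bd : ∀ p ∈ U₂, (2:ℝ) ≤ |f p.1 - f p.2| := by
      rintro ⟨v, w⟩ (⟨hv, hw⟩ | ⟨hv, hw⟩)
      · have := hA_le v hv; have := hC_ge w hw
        rw [abs_sub_comm]; refine le_trans ?_ (le_abs_self _); linarith
      · have := hC_ge v hv; have := hA_le w hw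
        refine le_trans ?_ (le_abs_self _); linarith
    -- disjointness of U₁ and U₂
    have hdisjU : Disjoint U₁ U₂ := by
      rw [Set.disjoint_left]
      rintro ⟨v, w⟩ hp1 hp2
      have h1 : v ∈ B ∨ w ∈ B := by
        rcases hp1 with ((⟨hv, hw⟩ | ⟨hv, hw⟩) | ⟨hv, hw⟩) | ⟨hv, hw⟩
        · exact Or.inr hw
        · exact Or.inl hv
        · exact Or.inl hv
        · exact Or.inr hw
      have h2 : v ∉ B ∧ w ∉ B := by
        rcases hp2 with ⟨hv, hw⟩ | ⟨hv, hw⟩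
        · exact ⟨fun h => (Set.disjoint_right.mp hdisjAB h) hv,
            fun h => (Set.disjoint_left.mp hdisjBC h) hw⟩
        · exact ⟨fun h => (Set.disjoint_left.mp hdisjBC h) hv,
            fun h => (Set.disjoint_right.mp hdisjAB h) hw⟩
      tauto
    -- measures of U₁ and U₂
    have hμ1 : (μ U₁).toReal = a*b + b*a + b*c + c*b := by
      have d1 : Disjoint ((A ×ˢ B) ∪ (B ×ˢ A) ∪ (B ×ˢ C)) (C ×ˢ B) := by
        refine Set.disjoint_union_left.mpr ⟨Set.disjoint_union_left.mpr ⟨?_, ?_⟩, ?_⟩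
        · refine Set.disjoint_left.mpr ?_
          rintro ⟨v, w⟩ ⟨hv, _⟩ ⟨hv', _⟩
          exact (Set.disjoint_left.mp hdisjAC hv) hv'
        · refine Set.disjoint_left.mpr ?_
          rintro ⟨v, w⟩ ⟨hv, _⟩ ⟨hv', _⟩
          exact (Set.disjoint_left.mp hdisjBC hv) hv'
        · refine Set.disjoint_left.mpr ?_
          rintro ⟨v, w⟩ ⟨hv, _⟩ ⟨hv', _⟩
          exact (Set.disjoint_left.mp hdisjBC hv) hv'
      have d2 : Disjoint ((A ×ˢ B) ∪ (B ×ˢ A)) (B ×ˢ C) := by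
        refine Set.disjoint_union_left.mpr ⟨?_, ?_⟩
        · refine Set.disjoint_left.mpr ?_
          rintro ⟨v, w⟩ ⟨hv, _⟩ ⟨hv', _⟩
          exact (Set.disjoint_left.mp hdisjAB hv) hv'
        · refine Set.disjoint_left.mpr ?_
          rintro ⟨v, w⟩ ⟨_, hw⟩ ⟨_, hw'⟩
          exact (Set.disjoint_left.mp hdisjAC hw) hw' 
      have d3 : Disjoint (A ×ˢ B) (B ×ˢ A) := by
        refine Set.disjoint_left.mpr ?_
        rintro ⟨v, w⟩ ⟨hv, _⟩ ⟨hv', _⟩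
        exact (Set.disjoint_left.mp hdisjAB hv) hv' 
      rw [hU1def]
      rw [measure_union d1 (hCmeas.prod hBmeas), measure_union d2 (hBmeas.prod hCmeas),
        measure_union d3 (hBmeas.prod hAmeas)]
      simp only [hμdef, Measure.prod_prod]
      rw [ENNReal.toReal_add (by finiteness) (by finiteness),
        ENNReal.toReal_add (by finiteness) (by finiteness),
        ENNReal.toReal_add (by finiteness) (by finiteness)]
      simp [ENNReal.toReal_mul, hadef, hbdef, hcdef]
    have hμ2 : (μ U₂).toReal = a*c + c*a := by
      have d4 : Disjoint (A ×ˢ C) (C ×ˢ A) := by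
        refine Set.disjoint_left.mpr ?_
        rintro ⟨v, w⟩ ⟨hv, _⟩ ⟨hv', _⟩
        exact (Set.disjoint_left.mp hdisjAC hv) hv' 
      rw [hU2def, measure_union d4 (hCmeas.prod hAmeas)]
      simp only [hμdef, Measure.prod_prod]
      rw [ENNReal.toReal_add (by finiteness) (by finiteness)]
      simp [ENNReal.toReal_mul, hadef, hcdef]
    -- the integral lower bound
    have hI1 : 1 * (μ U₁).toReal ≤ ∫ p in U₁, |f p.1 - f p.2| ∂μ :=
      setIntegral_ge_of_const_le_real hU1meas (measure_ne_top _ _) hU1bd hgint.integrableOn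
    have hI2 : 2 * (μ U₂).toReal ≤ ∫ p in U₂, |f p.1 - f p.2| ∂μ :=
      setIntegral_ge_of_const_le_real hU2meas (measure_ne_top _ _) hU2bd hgint.integrableOn
    have hsplit : ∫ p in U₁ ∪ U₂, |f p.1 - f p.2| ∂μ
        = (∫ p in U₁, |f p.1 - f p.2| ∂μ) + ∫ p in U₂, |f p.1 - f p.2| ∂μ :=
      setIntegral_union hdisjU hU2meas hgint.integrableOn hgint.integrableOn
    have htotal : ∫ p in U₁ ∪ U₂, |f p.1 - f p.2| ∂μ ≤ ∫ p : P × P, |f p.1 - f p.2| ∂μ :=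
      setIntegral_le_integral hgint (ae_of_all _ fun p => abs_nonneg _)
    have hkey : 1/4 < 2*a*b + 2*b*c + 4*a*c := key_ineq a b c ha0 hb0 hc0 ha hb hc hs
    rw [hμ1] at hI1
    rw [hμ2] at hI2
    have hge : 1 * (a*b + b*a + b*c + c*b) + 2 * (a*c + c*a)
        ≤ ∫ p : P × P, |f p.1 - f p.2| ∂μ := by
      calc 1 * (a*b + b*a + b*c + c*b) + 2 * (a*c + c*a)
          ≤ (∫ p in U₁, |f p.1 - f p.2| ∂μ) + ∫ p in U₂, |f p.1 - f p.2| ∂μ :=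
            add_le_add hI1 hI2
        _ = ∫ p in U₁ ∪ U₂, |f p.1 - f p.2| ∂μ := hsplit.symm
        _ ≤ _ := htotal
    rw [hμdef] at hge
    nlinarith [hge, hkey, hosc]


theorem small_oscillation_integer_concentration {P : Type*} [MeasurableSpace P]
    (ρ : Measure P) [IsProbabilityMeasure ρ]
    (f : P → ℝ) (hfmeas : Measurable f) (hf : Integrable f ρ)
    (hE : ρ {v | ¬ ∃ z : ℤ, f v = (z : ℝ)} < ENNReal.ofReal (1 / 4))
    (hosc : ∫ p : P × P, |f p.1 - f p.2| ∂(ρ.prod ρ) < 1 / 4) :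
    ∃ k : ℤ, ∃ E' : Set P, (∀ v ∈ E', f v = (k : ℝ)) ∧
      ENNReal.ofReal (1 / 2) ≤ ρ E' := by
  classical
  -- Markov bound on the tail of |f|
  set I : ℝ := ∫ v, |f v| ∂ρ with hI
  have hI0 : 0 ≤ I := integral_nonneg fun v => abs_nonneg _
  set M : ℝ := 2 * I + 1 with hM
  have hM0 : 0 < M := by positivity
  have htail : (ρ {v | M ≤ |f v|}).toReal < 1 / 2 := by
    have := mul_meas_ge_le_integral_of_nonneg
      (ae_of_all ρ fun v => abs_nonneg (f v)) hf.abs M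
    have h2 : (ρ {v | M ≤ |f v|}).toReal ≤ I / M := by
      rw [le_div_iff₀ hM0]
      simp only [Measure.real, ← hI] at this
      linarith [this]
    calc (ρ {v | M ≤ |f v|}).toReal ≤ I / M := h2
      _ < 1 / 2 := by rw [div_lt_iff₀ hM0]; simp [hM]; linarith
  -- the predicate and its least element
  set Q : ℤ → Prop := fun n => (1:ℝ)/2 ≤ (ρ {v | f v ≤ (n:ℝ)}).toReal with hQ
  have hinh : ∃ n, Q n := by
    refine ⟨⌈M⌉, ?_⟩
    have hsub : {v | f v ≤ ((⌈M⌉:ℤ):ℝ)}ᶜ ⊆ {v | M ≤ |f v|} := by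
      intro v hv
      simp only [Set.mem_compl_iff, Set.mem_setOf_eq, not_le] at hv
      have : M ≤ f v := le_trans (Int.le_ceil M) hv.le
      exact le_trans this (le_abs_self _)
    have hms : MeasurableSet {v | f v ≤ ((⌈M⌉:ℤ):ℝ)} := hfmeas measurableSet_Iic
    have h1 : (ρ {v | f v ≤ ((⌈M⌉:ℤ):ℝ)}).toReal
        + (ρ {v | f v ≤ ((⌈M⌉:ℤ):ℝ)}ᶜ).toReal = 1 := by
      rw [← ENNReal.toReal_add (measure_ne_top _ _) (measure_ne_top _ _),
        measure_add_measure_compl hms, measure_univ, ENNReal.toReal_one]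
    have h2 : (ρ {v | f v ≤ ((⌈M⌉:ℤ):ℝ)}ᶜ).toReal ≤ (ρ {v | M ≤ |f v|}).toReal :=
      ENNReal.toReal_mono (measure_ne_top _ _) (measure_mono hsub)
    simp only [hQ]
    linarith
  have hbdd : ∃ b : ℤ, ∀ z : ℤ, Q z → b ≤ z := by
    refine ⟨-⌈M⌉, fun z hz => ?_⟩
    by_contra hlt
    push_neg at hlt
    have hzM : (z:ℝ) ≤ -M := by
      have : (z:ℝ) < -(⌈M⌉:ℤ) := by exact_mod_cast hlt
      have h' : (z:ℝ) + 1 ≤ -(⌈M⌉:ℤ) := by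
        have : z + 1 ≤ -⌈M⌉ := hlt
        exact_mod_cast this
      have : -((⌈M⌉:ℤ):ℝ) ≤ -M + 1 := by
        have := Int.ceil_lt_add_one M
        push_cast
        linarith [Int.le_ceil M, Int.ceil_lt_add_one M]
      linarith
    have hsub : {v | f v ≤ (z:ℝ)} ⊆ {v | M ≤ |f v|} := by
      intro v hv
      simp only [Set.mem_setOf_eq] at hv ⊢
      have : f v ≤ -M := le_trans hv hzM
      calc M ≤ -f v := by linarith
        _ ≤ |f v| := neg_le_abs _
    have : (ρ {v | f v ≤ (z:ℝ)}).toReal < 1/2 :=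
      lt_of_le_of_lt (ENNReal.toReal_mono (measure_ne_top _ _) (measure_mono hsub)) htail
    exact absurd hz (by simp only [hQ]; linarith)
  obtain ⟨k, hk, hkleast⟩ := Int.exists_least_of_bdd hbdd hinh
  have hk1 : (ρ {v | f v ≤ (((k-1:ℤ)):ℝ)}).toReal < 1/2 := by
    by_contra h
    push_neg at h
    have : k ≤ k - 1 := hkleast (k-1) (by simpa [hQ] using h)
    omega
  exact aux_reduction ρ f hfmeas hf hE hosc k hk hk1
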